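/- arXiv:1204.6699 — 6 statements merged into one kernel-verified Lean document; each statement's English description precedes it below -/
import Mathlib

section
/- Let P be a finite nonempty set of points in ℝ^d with mean m and variance δ² = (1/|P|)∑_{p∈P} ‖p − m‖². Let P₁ ⊆ P be a nonempty subset with |P₁| = α|P| for some 0 < α ≤ 1, P₁ ≠ P, and let m₁ be the mean of P₁. Then ‖m₁ − m‖ ≤ √((1−α)/α)·δ. -/
lemma norm_sum_sq_le_card_mul {E : Type*} [NormedAddCommGroup E]
    (s : Finset E) (f : E → E) :
    ‖∑ x ∈ s, f x‖ ^ 2 ≤ (s.card : ℝ) * ∑ x ∈ s, ‖f x‖ ^ 2 := by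
  calc ‖∑ x ∈ s, f x‖ ^ 2 ≤ (∑ x ∈ s, ‖f x‖) ^ 2 := by
        apply pow_le_pow_left₀ (norm_nonneg _) (norm_sum_le _ _)
    _ ≤ (s.card : ℝ) * ∑ x ∈ s, ‖f x‖ ^ 2 := sq_sum_le_card_mul_sum_sq

lemma habs_arith (a S1 S2 n1 n2 n t : ℝ) (ha : 0 ≤ a) (h1 : 0 < n1) (h2 : 0 < n2)
    (hs1 : 0 ≤ S1) (hs2 : 0 ≤ S2) (hn : n1 + n2 = n) (ht : S1 + S2 = n * t)
    (hb1 : a ≤ n1 * S1) (hb2 : a ≤ n2 * S2) : a ≤ n1 * n2 * t := by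
  have hnpos : 0 < n := by linarith
  have h1' : n2 * a ≤ n1 * n2 * S1 := by nlinarith
  have h2' : n1 * a ≤ n1 * n2 * S2 := by nlinarith
  have key : (n1 + n2) * a ≤ n1 * n2 * (S1 + S2) := by nlinarith
  rw [hn, ht] at key
  have key2 : n * a ≤ n * (n1 * n2 * t) := by nlinarith
  exact le_of_mul_le_mul_left key2 hnpos

set_option maxHeartbeats 1000000 in
theorem stmt_2 {d : ℕ} (P P₁ : Finset (EuclideanSpace ℝ (Fin d)))
    (hP : P.Nonempty) (hP₁ : P₁.Nonempty) (hsub : P₁ ⊆ P) (hne : P₁ ≠ P)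
    (m m₁ : EuclideanSpace ℝ (Fin d))
    (hm : m = (P.card : ℝ)⁻¹ • ∑ p ∈ P, p)
    (hm₁ : m₁ = (P₁.card : ℝ)⁻¹ • ∑ p ∈ P₁, p)
    (α : ℝ) (hα : α = (P₁.card : ℝ) / (P.card : ℝ)) (hα0 : 0 < α) (hα1 : α ≤ 1)
    (δ : ℝ) (hδ0 : 0 ≤ δ)
    (hδ : δ ^ 2 = (P.card : ℝ)⁻¹ * ∑ p ∈ P, ‖p - m‖ ^ 2) :
    ‖m₁ - m‖ ≤ Real.sqrt ((1 - α) / α) * δ := by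
  classical
  set P₂ : Finset (EuclideanSpace ℝ (Fin d)) := P \ P₁ with hP₂
  have hcard : (P₁.card : ℝ) + (P₂.card : ℝ) = (P.card : ℝ) := by
    rw [hP₂]
    rw [Finset.card_sdiff_of_subset hsub]
    have := Finset.card_le_card hsub
    push_cast [Nat.cast_sub this]
    ring
  have hn : (0:ℝ) < P.card := by exact_mod_cast Finset.card_pos.2 hP
  have hn1 : (0:ℝ) < P₁.card := by exact_mod_cast Finset.card_pos.2 hP₁
  have hn2 : (0:ℝ) < P₂.card := by
    have : P₂.Nonempty := by
      rw [hP₂, Finset.sdiff_nonempty]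
      intro h
      exact hne (Finset.Subset.antisymm hsub h)
    exact_mod_cast Finset.card_pos.2 this
  -- sum over P splits
  have hsplit : ∑ p ∈ P, ‖p - m‖ ^ 2 = (∑ p ∈ P₁, ‖p - m‖ ^ 2) + ∑ p ∈ P₂, ‖p - m‖ ^ 2 := by
    rw [hP₂, Finset.sum_sdiff_eq_sub hsub]; ring
  -- deviation sums
  set v : EuclideanSpace ℝ (Fin d) := ∑ p ∈ P₁, (p - m) with hv
  have hsumP : ∑ p ∈ P, (p - m) = 0 := by
    have : ∑ p ∈ P, (p - m) = (∑ p ∈ P, p) - (P.card : ℝ) • m := by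
      rw [Finset.sum_sub_distrib, Finset.sum_const, ← Nat.cast_smul_eq_nsmul ℝ]
    rw [this, hm, smul_inv_smul₀ (ne_of_gt hn)]
    simp
  have hv2 : ∑ p ∈ P₂, (p - m) = -v := by
    have : v + ∑ p ∈ P₂, (p - m) = ∑ p ∈ P, (p - m) := by
      rw [hv, hP₂, Finset.sum_sdiff_eq_sub hsub]; abel
    rw [hsumP] at this
    exact eq_neg_of_add_eq_zero_right this
  -- m₁ - m = (1/n₁) • v
  have hm₁v : m₁ - m = (P₁.card : ℝ)⁻¹ • v := by
    rw [hv, Finset.sum_sub_distrib, smul_sub, hm₁, Finset.sum_const,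
      ← Nat.cast_smul_eq_nsmul ℝ, inv_smul_smul₀ (ne_of_gt hn1)]
  have hnorm : ‖m₁ - m‖ = ‖v‖ / (P₁.card : ℝ) := by
    rw [hm₁v, norm_smul]
    simp [abs_of_pos (inv_pos.2 hn1), div_eq_inv_mul]
  -- Cauchy-Schwarz bounds
  have hb1 : ‖v‖ ^ 2 ≤ (P₁.card : ℝ) * ∑ p ∈ P₁, ‖p - m‖ ^ 2 :=
    norm_sum_sq_le_card_mul P₁ (fun p => p - m)
  have hb2 : ‖v‖ ^ 2 ≤ (P₂.card : ℝ) * ∑ p ∈ P₂, ‖p - m‖ ^ 2 := by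
    have := norm_sum_sq_le_card_mul P₂ (fun p => p - m)
    rwa [hv2, norm_neg] at this
  have hS1 : (0:ℝ) ≤ ∑ p ∈ P₁, ‖p - m‖ ^ 2 := Finset.sum_nonneg fun _ _ => sq_nonneg _
  have hS2 : (0:ℝ) ≤ ∑ p ∈ P₂, ‖p - m‖ ^ 2 := Finset.sum_nonneg fun _ _ => sq_nonneg _
  -- total sum = n δ²
  have htot : ∑ p ∈ P, ‖p - m‖ ^ 2 = (P.card : ℝ) * δ ^ 2 := by
    rw [hδ]; field_simp
  -- key: ‖v‖² ≤ n₁ n₂ δ²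
  have hkey : ‖v‖ ^ 2 ≤ (P₁.card : ℝ) * (P₂.card : ℝ) * δ ^ 2 := by
    exact habs_arith (‖v‖ ^ 2) _ _ _ _ _ (δ ^ 2) (sq_nonneg _) hn1 hn2 hS1 hS2 hcard
      (by rw [← hsplit, htot]) hb1 hb2
  -- conclude
  have hfrac : (1 - α) / α = (P₂.card : ℝ) / (P₁.card : ℝ) := by
    rw [hα]; field_simp; nlinarith
  have hsq : ‖m₁ - m‖ ^ 2 ≤ (1 - α) / α * δ ^ 2 := by
    rw [hnorm, hfrac, div_pow, div_le_iff₀ (by positivity)]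
    have heq : (P₂.card:ℝ) / (P₁.card:ℝ) * δ ^ 2 * ((P₁.card:ℝ)) ^ 2
        = (P₁.card:ℝ) * (P₂.card:ℝ) * δ ^ 2 := by field_simp
    rw [heq]; exact hkey
  have h0 : (0:ℝ) ≤ (1 - α) / α * δ ^ 2 := le_trans (sq_nonneg _) hsq
  calc ‖m₁ - m‖ = Real.sqrt (‖m₁ - m‖ ^ 2) := (Real.sqrt_sq (norm_nonneg _)).symm
    _ ≤ Real.sqrt ((1 - α) / α * δ ^ 2) := Real.sqrt_le_sqrt hsq
    _ = Real.sqrt ((1 - α) / α) * δ := by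
        rw [Real.sqrt_mul (div_nonneg (by linarith) hα0.le), Real.sqrt_sq hδ0]
end

section
/- Let P be a finite set with mean o and variance δ², partitioned into disjoint nonempty subsets P₁,…,P_j such that |P_l|/|P| ≥ ε/(4j) for each l, where 0 < ε ≤ 1. Then for each l, ‖o_l − o‖ ≤ 2√(j/ε)·δ, where o_l is the mean of P_l; consequently ‖o_{l} − o_{l'}‖ ≤ 4√(j/ε)·δ for all l, l'. -/
theorem stmt_6 {d j : ℕ} [DecidableEq (EuclideanSpace ℝ (Fin d))] (P : Finset (EuclideanSpace ℝ (Fin d)))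
    (Q : Fin j → Finset (EuclideanSpace ℝ (Fin d)))
    (hne : ∀ l, (Q l).Nonempty)
    (hdisj : ∀ l₁ l₂, l₁ ≠ l₂ → Disjoint (Q l₁) (Q l₂))
    (hP : P = Finset.univ.biUnion Q)
    (hQP : ∀ l, Q l ≠ P)
    (ε : ℝ) (hε0 : 0 < ε) (hε1 : ε ≤ 1)
    (hfrac : ∀ l, ((Q l).card : ℝ) ≥ (ε / (4 * j)) * (P.card : ℝ))
    (o : EuclideanSpace ℝ (Fin d)) (oL : Fin j → EuclideanSpace ℝ (Fin d))
    (ho : o = (P.card : ℝ)⁻¹ • ∑ p ∈ P, p)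
    (hoL : ∀ l, oL l = ((Q l).card : ℝ)⁻¹ • ∑ p ∈ Q l, p)
    (δ : ℝ) (hδ0 : 0 ≤ δ)
    (hδ : δ ^ 2 = (P.card : ℝ)⁻¹ * ∑ p ∈ P, ‖p - o‖ ^ 2) :
    (∀ l, ‖oL l - o‖ ≤ 2 * Real.sqrt ((j : ℝ) / ε) * δ) ∧
      (∀ l l', ‖oL l - oL l'‖ ≤ 4 * Real.sqrt ((j : ℝ) / ε) * δ) := by
  have key : ∀ l, ‖oL l - o‖ ≤ 2 * Real.sqrt ((j : ℝ) / ε) * δ := by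
    intro l
    have hj0 : 0 < (j : ℝ) := by
      have : 0 < j := Fin.pos l
      exact_mod_cast this
    have hQsub : Q l ⊆ P := by
      rw [hP]; exact Finset.subset_biUnion_of_mem Q (Finset.mem_univ l)
    have hm : 0 < ((Q l).card : ℝ) := by
      exact_mod_cast Finset.card_pos.mpr (hne l)
    have hn : 0 < ((P.card : ℝ)) := by
      exact_mod_cast Finset.card_pos.mpr ((hne l).mono hQsub)
    set m := ((Q l).card : ℝ) with hmdef
    set n := ((P.card : ℝ)) with hndef
    -- oL l - o = m⁻¹ • ∑ (p - o)
    have heq : oL l - o = (m : ℝ)⁻¹ • ∑ p ∈ Q l, (p - o) := by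
      rw [hoL l, Finset.sum_sub_distrib, smul_sub, sub_right_inj]
      rw [Finset.sum_const, ← Nat.cast_smul_eq_nsmul ℝ, smul_smul,
        inv_mul_cancel₀ (by exact_mod_cast hm.ne'), one_smul]
    have hnorm : ‖oL l - o‖ ≤ m⁻¹ * ∑ p ∈ Q l, ‖p - o‖ := by
      rw [heq, norm_smul, Real.norm_eq_abs, abs_of_nonneg (inv_nonneg.mpr hm.le)]
      gcongr
      exact norm_sum_le _ _
    -- Cauchy–Schwarz
    have hCS : (∑ p ∈ Q l, ‖p - o‖) ^ 2 ≤ m * ∑ p ∈ Q l, ‖p - o‖ ^ 2 :=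
      sq_sum_le_card_mul_sum_sq
    have hsub : ∑ p ∈ Q l, ‖p - o‖ ^ 2 ≤ ∑ p ∈ P, ‖p - o‖ ^ 2 :=
      Finset.sum_le_sum_of_subset_of_nonneg hQsub (fun _ _ _ => by positivity)
    have hPsum : ∑ p ∈ P, ‖p - o‖ ^ 2 = n * δ ^ 2 := by
      rw [hδ]; field_simp
    have hsq : ‖oL l - o‖ ^ 2 ≤ (n / m) * δ ^ 2 := by
      have h1 : ‖oL l - o‖ ^ 2 ≤ (m⁻¹ * ∑ p ∈ Q l, ‖p - o‖) ^ 2 :=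
        pow_le_pow_left₀ (norm_nonneg _) hnorm 2
      calc ‖oL l - o‖ ^ 2 ≤ (m⁻¹ * ∑ p ∈ Q l, ‖p - o‖) ^ 2 := h1
        _ = m⁻¹ ^ 2 * (∑ p ∈ Q l, ‖p - o‖) ^ 2 := by ring
        _ ≤ m⁻¹ ^ 2 * (m * ∑ p ∈ Q l, ‖p - o‖ ^ 2) := by gcongr
        _ ≤ m⁻¹ ^ 2 * (m * ∑ p ∈ P, ‖p - o‖ ^ 2) := by gcongr
        _ = m⁻¹ ^ 2 * (m * (n * δ ^ 2)) := by rw [hPsum]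
        _ = (n / m) * δ ^ 2 := by field_simp
    have hratio : n / m ≤ 4 * j / ε := by
      rw [div_le_div_iff₀ hm (by positivity)]
      have h := mul_le_mul_of_nonneg_right (hfrac l) (by positivity : (0:ℝ) ≤ 4 * j)
      have he : ε / (4 * j) * n * (4 * j) = ε * n := by
        field_simp
      rw [he] at h
      nlinarith [h]
    have hsq2 : ‖oL l - o‖ ^ 2 ≤ (2 * Real.sqrt ((j : ℝ) / ε) * δ) ^ 2 := by
      have hsqrt : Real.sqrt ((j : ℝ) / ε) ^ 2 = (j : ℝ) / ε :=
        Real.sq_sqrt (by positivity)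
      have : (2 * Real.sqrt ((j : ℝ) / ε) * δ) ^ 2 = 4 * ((j : ℝ) / ε) * δ ^ 2 := by
        rw [mul_pow, mul_pow, hsqrt]; ring
      rw [this]
      calc ‖oL l - o‖ ^ 2 ≤ (n / m) * δ ^ 2 := hsq
        _ ≤ (4 * j / ε) * δ ^ 2 := by gcongr
        _ = 4 * ((j : ℝ) / ε) * δ ^ 2 := by ring
    have h2s : 0 ≤ 2 * Real.sqrt ((j : ℝ) / ε) * δ := by positivity
    have := Real.sqrt_le_sqrt hsq2
    rwa [Real.sqrt_sq (norm_nonneg _), Real.sqrt_sq h2s] at this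
  refine ⟨key, fun l l' => ?_⟩
  have h1 := key l
  have h2 := key l'
  calc ‖oL l - oL l'‖ = ‖(oL l - o) - (oL l' - o)‖ := by congr 1; abel
    _ ≤ ‖oL l - o‖ + ‖oL l' - o‖ := norm_sub_le _ _
    _ ≤ 4 * Real.sqrt ((j : ℝ) / ε) * δ := by linarith
end

section
/- Let P be a finite nonempty set of points in ℝ^d and P₁ ⊆ P with |P₁| = α|P|, 0 < α ≤ 1. Let m_opt minimize q ↦ ∑_{p∈P}‖p−q‖ over ℝ^d, let m be a (1+ε)-approximate median of P (i.e., ∑_{p∈P}‖p−m‖ ≤ (1+ε)∑_{p∈P}‖p−m_opt‖), and let m₁ minimize q ↦ ∑_{p∈P₁}‖p−q‖. Then ‖m₁ − m‖ ≤ ((2+ε)/α)·μ, where μ = (1/|P|)∑_{p∈P}‖p − m_opt‖. -/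
theorem stmt_8 {d : ℕ} (P P₁ : Finset (EuclideanSpace ℝ (Fin d)))
    (hP : P.Nonempty) (hP₁ : P₁.Nonempty) (hsub : P₁ ⊆ P)
    (α : ℝ) (hα : α = (P₁.card : ℝ) / (P.card : ℝ)) (hα0 : 0 < α) (hα1 : α ≤ 1)
    (ε : ℝ) (hε : 0 ≤ ε)
    (mopt m m₁ : EuclideanSpace ℝ (Fin d))
    (hmopt : ∀ q, ∑ p ∈ P, ‖p - mopt‖ ≤ ∑ p ∈ P, ‖p - q‖)
    (hm : ∑ p ∈ P, ‖p - m‖ ≤ (1 + ε) * ∑ p ∈ P, ‖p - mopt‖)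
    (hm₁ : ∀ q, ∑ p ∈ P₁, ‖p - m₁‖ ≤ ∑ p ∈ P₁, ‖p - q‖)
    (μ : ℝ) (hμ : μ = (P.card : ℝ)⁻¹ * ∑ p ∈ P, ‖p - mopt‖) :
    ‖m₁ - m‖ ≤ (2 + ε) / α * μ := by
  have hPc : (0:ℝ) < (P.card : ℝ) := by
    exact_mod_cast Finset.card_pos.mpr hP
  have hP₁c : (0:ℝ) < (P₁.card : ℝ) := by
    exact_mod_cast Finset.card_pos.mpr hP₁
  have hsum_mono : ∀ q : EuclideanSpace ℝ (Fin d),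
      ∑ p ∈ P₁, ‖p - q‖ ≤ ∑ p ∈ P, ‖p - q‖ := fun q =>
    Finset.sum_le_sum_of_subset_of_nonneg hsub (fun p _ _ => norm_nonneg _)
  have h1 : ∑ p ∈ P₁, ‖p - m₁‖ ≤ ∑ p ∈ P, ‖p - mopt‖ :=
    (hm₁ mopt).trans (hsum_mono mopt)
  have h2 : ∑ p ∈ P₁, ‖p - m‖ ≤ (1 + ε) * ∑ p ∈ P, ‖p - mopt‖ :=
    (hsum_mono m).trans hm
  have htri : (P₁.card : ℝ) * ‖m₁ - m‖ ≤ ∑ p ∈ P₁, (‖p - m₁‖ + ‖p - m‖) := by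
    have := Finset.sum_le_sum (s := P₁)
      (f := fun _ => ‖m₁ - m‖) (g := fun p => ‖p - m₁‖ + ‖p - m‖)
      (fun p _ => by
        calc ‖m₁ - m‖ = ‖(m₁ - p) + (p - m)‖ := by
              rw [show m₁ - m = (m₁ - p) + (p - m) by abel]
          _ ≤ ‖m₁ - p‖ + ‖p - m‖ := norm_add_le _ _
          _ = ‖p - m₁‖ + ‖p - m‖ := by rw [norm_sub_rev])
    simpa [Finset.sum_const, nsmul_eq_mul] using this
  rw [Finset.sum_add_distrib] at htri
  have key : (P₁.card : ℝ) * ‖m₁ - m‖ ≤ (2 + ε) * ∑ p ∈ P, ‖p - mopt‖ := by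
    nlinarith
  rw [hα, hμ]
  rw [div_div_eq_mul_div]
  have hrhs : (2 + ε) * (P.card:ℝ) / (P₁.card:ℝ) * ((P.card:ℝ)⁻¹ * ∑ p ∈ P, ‖p - mopt‖)
      = (2 + ε) * (∑ p ∈ P, ‖p - mopt‖) / (P₁.card:ℝ) := by
    field_simp
  rw [hrhs, le_div_iff₀ hP₁c]
  linarith [key]
end

section
/- Let P be a finite nonempty set in ℝ^d partitioned into disjoint nonempty subsets P₁,…,P_j. Let o be an optimal median of P (minimizing the sum of distances), o_l an optimal median of P_l, and μ = (1/|P|)∑_{p∈P}‖p−o‖. Then there exists an index i₀ with ‖o − o_{i₀}‖ ≤ 4μ. -/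
theorem stmt_9 {d j : ℕ} [DecidableEq (EuclideanSpace ℝ (Fin d))] (P : Finset (EuclideanSpace ℝ (Fin d))) (hP : P.Nonempty)
    (Q : Fin j → Finset (EuclideanSpace ℝ (Fin d)))
    (hne : ∀ l, (Q l).Nonempty)
    (hdisj : ∀ l₁ l₂, l₁ ≠ l₂ → Disjoint (Q l₁) (Q l₂))
    (hPQ : P = Finset.univ.biUnion Q)
    (o : EuclideanSpace ℝ (Fin d)) (oL : Fin j → EuclideanSpace ℝ (Fin d))
    (ho : ∀ q, ∑ p ∈ P, ‖p - o‖ ≤ ∑ p ∈ P, ‖p - q‖)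
    (hoL : ∀ l q, ∑ p ∈ Q l, ‖p - oL l‖ ≤ ∑ p ∈ Q l, ‖p - q‖)
    (μ : ℝ) (hμ : μ = (P.card : ℝ)⁻¹ * ∑ p ∈ P, ‖p - o‖) :
    ∃ i₀ : Fin j, ‖o - oL i₀‖ ≤ 4 * μ := by
  have hcard : (0 : ℝ) < P.card := by
    exact_mod_cast Finset.card_pos.mpr hP
  have hsum : μ * P.card = ∑ p ∈ P, ‖p - o‖ := by
    rw [hμ]; field_simp
  have hμ0 : 0 ≤ μ := by
    rw [hμ]
    exact mul_nonneg (by positivity) (Finset.sum_nonneg fun p _ => norm_nonneg _)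
  -- split the sum over clusters
  have hpd : ((Finset.univ : Finset (Fin j)) : Set (Fin j)).PairwiseDisjoint Q := by
    intro a _ b _ hab; exact hdisj a b hab
  have hsplit : ∑ p ∈ P, ‖p - o‖ = ∑ l : Fin j, ∑ p ∈ Q l, ‖p - o‖ := by
    rw [hPQ]; exact Finset.sum_biUnion hpd
  have hcardsplit : (P.card : ℝ) = ∑ l : Fin j, ((Q l).card : ℝ) := by
    rw [hPQ, Finset.card_biUnion (fun a _ b _ hab => hdisj a b hab)]
    push_cast; ring
  -- find a cluster with average distance ≤ μ
  have hex : ∃ l : Fin j, ∑ p ∈ Q l, ‖p - o‖ ≤ μ * (Q l).card := by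
    by_contra h
    push_neg at h
    have hj : 0 < j := by
      rcases Nat.eq_zero_or_pos j with hj0 | hj0
      · exfalso
        subst hj0
        rw [hPQ] at hP
        simp at hP
      · exact hj0
    have : ∑ l : Fin j, μ * ((Q l).card : ℝ) < ∑ l : Fin j, ∑ p ∈ Q l, ‖p - o‖ := by
      apply Finset.sum_lt_sum_of_nonempty
      · exact Finset.univ_nonempty_iff.mpr ⟨⟨0, hj⟩⟩
      · intro l _; exact h l
    rw [← hsplit, ← Finset.mul_sum, ← hcardsplit, hsum] at this
    exact lt_irrefl _ this
  obtain ⟨l, hl⟩ := hex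
  refine ⟨l, ?_⟩
  have hql : (0 : ℝ) < (Q l).card := by exact_mod_cast Finset.card_pos.mpr (hne l)
  have h1 : ∑ p ∈ Q l, ‖p - oL l‖ ≤ μ * (Q l).card := (hoL l o).trans hl
  have h2 : ((Q l).card : ℝ) * ‖o - oL l‖ ≤ 2 * μ * (Q l).card := by
    have : ((Q l).card : ℝ) * ‖o - oL l‖ = ∑ _p ∈ Q l, ‖o - oL l‖ := by
      rw [Finset.sum_const, nsmul_eq_mul]
    rw [this]
    calc ∑ p ∈ Q l, ‖o - oL l‖ ≤ ∑ p ∈ Q l, (‖p - o‖ + ‖p - oL l‖) := by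
          apply Finset.sum_le_sum
          intro p _
          calc ‖o - oL l‖ = ‖(p - oL l) - (p - o)‖ := by rw [sub_sub_sub_cancel_left]
            _ ≤ ‖p - oL l‖ + ‖p - o‖ := norm_sub_le _ _
            _ = ‖p - o‖ + ‖p - oL l‖ := by ring
      _ = (∑ p ∈ Q l, ‖p - o‖) + ∑ p ∈ Q l, ‖p - oL l‖ := Finset.sum_add_distrib
      _ ≤ μ * (Q l).card + μ * (Q l).card := add_le_add hl h1
      _ = 2 * μ * (Q l).card := by ring
  have h3 : ‖o - oL l‖ ≤ 2 * μ := by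
    have := mul_le_mul_iff_of_pos_right hql |>.mp (by linarith [h2] : ‖o - oL l‖ * (Q l).card ≤ (2 * μ) * (Q l).card)
    exact this
  linarith
end

section
/- Let {Opt_1,…,Opt_k} be the optimal chromatic k-means clusters of a point set G with optimal mean points m_i, and let {S_1,…,S_k} with centers c_j be a c-approximate (ordinary) k-means solution on the same points. Suppose for each i an index j_i is chosen with |Opt_i ∩ S_{j_i}| ≥ |Opt_i|/k. Then ∑_{i=1}^k ∑_{p∈Opt_i} ‖p − c_{j_i}‖² ≤ (2ck² + 2k − 1)·∑_{i=1}^k ∑_{p∈Opt_i} ‖p − m_i‖². -/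
private lemma cen_decomp {E : Type*} [NormedAddCommGroup E] [InnerProductSpace ℝ E]
    (B : Finset E) (μ x : E) (hμ : (B.card : ℝ) • μ = ∑ p ∈ B, p) :
    ∑ p ∈ B, ‖p - x‖ ^ 2 = ∑ p ∈ B, ‖p - μ‖ ^ 2 + (B.card : ℝ) * ‖μ - x‖ ^ 2 := by
  have hzero : ∑ p ∈ B, (p - μ) = 0 := by
    rw [Finset.sum_sub_distrib, Finset.sum_const, ← Nat.cast_smul_eq_nsmul ℝ, hμ, sub_self]
  have hexp : ∀ p : E, ‖p - x‖ ^ 2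
      = ‖p - μ‖ ^ 2 + 2 * (inner ℝ (p - μ) (μ - x) : ℝ) + ‖μ - x‖ ^ 2 := fun p => by
    have h : p - x = (p - μ) + (μ - x) := by abel
    rw [h, norm_add_sq_real]
  calc ∑ p ∈ B, ‖p - x‖ ^ 2
      = ∑ p ∈ B, (‖p - μ‖ ^ 2 + 2 * (inner ℝ (p - μ) (μ - x) : ℝ) + ‖μ - x‖ ^ 2) :=
        Finset.sum_congr rfl fun p _ => hexp p
    _ = ∑ p ∈ B, ‖p - μ‖ ^ 2 + 2 * (inner ℝ (∑ p ∈ B, (p - μ)) (μ - x) : ℝ)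
          + (B.card : ℝ) * ‖μ - x‖ ^ 2 := by
        rw [Finset.sum_add_distrib, Finset.sum_add_distrib, Finset.sum_const, sum_inner,
          ← Finset.mul_sum, nsmul_eq_mul]
    _ = ∑ p ∈ B, ‖p - μ‖ ^ 2 + (B.card : ℝ) * ‖μ - x‖ ^ 2 := by
        rw [hzero, inner_zero_left]; ring

private lemma cen_lb {E : Type*} [NormedAddCommGroup E] [InnerProductSpace ℝ E]
    (B : Finset E) (μ x : E) (hμ : (B.card : ℝ) • μ = ∑ p ∈ B, p) :
    (B.card : ℝ) * ‖μ - x‖ ^ 2 ≤ ∑ p ∈ B, ‖p - x‖ ^ 2 := by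
  have h := cen_decomp B μ x hμ
  have h2 : (0:ℝ) ≤ ∑ p ∈ B, ‖p - μ‖ ^ 2 := by positivity
  linarith

set_option maxHeartbeats 1000000 in
/-- Key per-cluster bound in an abstract real inner product space. -/
private lemma key_bound {E : Type*} [NormedAddCommGroup E] [InnerProductSpace ℝ E]
    [DecidableEq E] (k : ℕ) (hk : 0 < k) (A T : Finset E) (hA : A.Nonempty)
    (mA cc : E) (KM : ℝ)
    (hmA : (A.card : ℝ) • mA = ∑ p ∈ A, p)
    (hcard : (A.card : ℝ) / (k : ℝ) ≤ ((A ∩ T).card : ℝ))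
    (hKM1 : ∑ p ∈ T, ‖p - cc‖ ^ 2 ≤ KM) :
    ∑ p ∈ A, ‖p - cc‖ ^ 2
      ≤ (2 * (k : ℝ) - 1) * (∑ p ∈ A, ‖p - mA‖ ^ 2) + 2 * (k : ℝ) * KM := by
  have hkR : (0:ℝ) < k := by exact_mod_cast hk
  have hnpos : 0 < A.card := Finset.card_pos.2 hA
  have hnR : (0:ℝ) < (A.card : ℝ) := by exact_mod_cast hnpos
  set B := A ∩ T with hBdef
  have hBA : B ⊆ A := Finset.inter_subset_left
  have hBT : B ⊆ T := Finset.inter_subset_right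
  have hnk : (A.card : ℝ) ≤ (k:ℝ) * (B.card : ℝ) := by
    rw [div_le_iff₀ hkR] at hcard
    nlinarith
  have hbR : (0:ℝ) < (B.card : ℝ) := by nlinarith [div_pos hnR hkR]
  have hbpos : 0 < B.card := by exact_mod_cast hbR
  set μ := ((B.card : ℝ))⁻¹ • ∑ p ∈ B, p with hμdef
  have hμ : (B.card : ℝ) • μ = ∑ p ∈ B, p := by
    rw [hμdef, smul_inv_smul₀ (ne_of_gt hbR)]
  set Ai := ∑ p ∈ A, ‖p - mA‖ ^ 2 with hAi
  have hAinn : 0 ≤ Ai := by positivity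
  set X := ‖mA - μ‖ ^ 2 with hX
  set Y := ‖μ - cc‖ ^ 2 with hY
  have hXnn : 0 ≤ X := by positivity
  have hYnn : 0 ≤ Y := by positivity
  have hid : ∑ p ∈ A, ‖p - cc‖ ^ 2 = Ai + (A.card : ℝ) * ‖mA - cc‖ ^ 2 :=
    cen_decomp A mA cc hmA
  -- claim 2 : n * Y ≤ k * KM
  have hcl2 : (A.card : ℝ) * Y ≤ (k:ℝ) * KM := by
    have e1 : (B.card : ℝ) * Y ≤ ∑ p ∈ B, ‖p - cc‖ ^ 2 := cen_lb B μ cc hμ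
    have e2 : ∑ p ∈ B, ‖p - cc‖ ^ 2 ≤ ∑ p ∈ T, ‖p - cc‖ ^ 2 :=
      Finset.sum_le_sum_of_subset_of_nonneg hBT (fun p _ _ => by positivity)
    have e4 : (B.card : ℝ) * Y ≤ KM := e1.trans (e2.trans hKM1)
    calc (A.card : ℝ) * Y ≤ ((k:ℝ) * (B.card : ℝ)) * Y :=
          mul_le_mul_of_nonneg_right hnk hYnn
      _ = (k:ℝ) * ((B.card : ℝ) * Y) := by ring
      _ ≤ (k:ℝ) * KM := mul_le_mul_of_nonneg_left e4 (le_of_lt hkR)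
  -- claim 1 : n * X ≤ (k-1) * Ai
  have hcl1 : (A.card : ℝ) * X ≤ ((k:ℝ) - 1) * Ai := by
    rcases eq_or_lt_of_le (Finset.card_le_card hBA) with hbn | hbn
    · -- B = A, so μ = mA
      have hBeq : B = A := Finset.eq_of_subset_of_card_le hBA (le_of_eq hbn.symm)
      have hμm : μ = mA := by
        have h1 : (A.card : ℝ) • μ = ∑ p ∈ A, p := by
          rw [← hBeq]; exact hμ
        have h2 : (A.card : ℝ) • μ = (A.card : ℝ) • mA := by rw [h1, hmA]
        exact smul_right_injective E (ne_of_gt hnR) h2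
      have hX0 : X = 0 := by rw [hX, hμm]; simp
      rw [hX0, mul_zero]
      have h1k : (0:ℝ) ≤ (k:ℝ) - 1 := by
        have : (1:ℝ) ≤ (k:ℝ) := by exact_mod_cast hk
        linarith
      positivity
    · -- B ⊊ A
      set C := A \ B with hCdef
      have hcard' : C.card = A.card - B.card := Finset.card_sdiff_of_subset hBA
      have hrpos : 0 < C.card := by omega
      have hrR : (0:ℝ) < (C.card : ℝ) := by exact_mod_cast hrpos
      have hbr : (B.card : ℝ) + (C.card : ℝ) = (A.card : ℝ) := by
        have : B.card + C.card = A.card := by omega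
        exact_mod_cast this
      have hsplit : ∑ p ∈ C, ‖p - mA‖ ^ 2 + ∑ p ∈ B, ‖p - mA‖ ^ 2 = Ai :=
        Finset.sum_sdiff hBA
      have s1 : (B.card : ℝ) * X ≤ ∑ p ∈ B, ‖p - mA‖ ^ 2 := by
        have h := cen_lb B μ mA hμ
        have hrev : ‖μ - mA‖ = ‖mA - μ‖ := norm_sub_rev _ _
        rw [hrev, ← hX] at h
        exact h
      have hsumC : ∑ p ∈ C, (p - mA) = (B.card : ℝ) • (mA - μ) := by
        have hA0 : ∑ p ∈ A, (p - mA) = 0 := by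
          rw [Finset.sum_sub_distrib, Finset.sum_const, ← Nat.cast_smul_eq_nsmul ℝ, hmA,
            sub_self]
        have hBsum : ∑ p ∈ B, (p - mA) = (B.card : ℝ) • μ - (B.card : ℝ) • mA := by
          rw [Finset.sum_sub_distrib, Finset.sum_const, ← Nat.cast_smul_eq_nsmul ℝ, hμ]
        have hsd : ∑ p ∈ C, (p - mA) + ∑ p ∈ B, (p - mA) = ∑ p ∈ A, (p - mA) :=
          Finset.sum_sdiff hBA
        rw [hA0, hBsum] at hsd
        have h9 : ∑ p ∈ C, (p - mA) = -((B.card : ℝ) • μ - (B.card : ℝ) • mA) :=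
          eq_neg_of_add_eq_zero_left hsd
        rw [h9, neg_sub, smul_sub]
      have s2 : ((B.card : ℝ)) ^ 2 * X ≤ (C.card : ℝ) * ∑ p ∈ C, ‖p - mA‖ ^ 2 := by
        have h1 : ‖∑ p ∈ C, (p - mA)‖ = (B.card : ℝ) * ‖mA - μ‖ := by
          rw [hsumC, norm_smul, Real.norm_eq_abs, abs_of_nonneg (le_of_lt hbR)]
        have h2 : ‖∑ p ∈ C, (p - mA)‖ ≤ ∑ p ∈ C, ‖p - mA‖ :=
          norm_sum_le _ _
        have h3 : (∑ p ∈ C, ‖p - mA‖) ^ 2 ≤ (C.card : ℝ) * ∑ p ∈ C, ‖p - mA‖ ^ 2 := by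
          exact sq_sum_le_card_mul_sum_sq (s := C) (f := fun p => ‖p - mA‖)
        have h4 : ((B.card : ℝ) * ‖mA - μ‖) ^ 2 ≤ (∑ p ∈ C, ‖p - mA‖) ^ 2 := by
          rw [← h1]
          have hnn : (0:ℝ) ≤ ‖∑ p ∈ C, (p - mA)‖ := norm_nonneg _
          nlinarith
        have h5 : ((B.card : ℝ) * ‖mA - μ‖) ^ 2 = (B.card : ℝ) ^ 2 * X := by
          rw [hX]; ring
        linarith [h5 ▸ (h4.trans h3)]
      have hrb : (C.card : ℝ) ≤ ((k:ℝ) - 1) * (B.card : ℝ) := by nlinarith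
      have hmain : (B.card : ℝ) * ((A.card : ℝ) * X) ≤ (C.card : ℝ) * Ai := by
        have hs1' : (C.card : ℝ) * ((B.card : ℝ) * X)
            ≤ (C.card : ℝ) * ∑ p ∈ B, ‖p - mA‖ ^ 2 :=
          mul_le_mul_of_nonneg_left s1 (le_of_lt hrR)
        have hexp : (B.card : ℝ) * ((A.card : ℝ) * X)
            = (B.card : ℝ) ^ 2 * X + (C.card : ℝ) * ((B.card : ℝ) * X) := by
          rw [← hbr]; ring
        have hsplit' : (C.card : ℝ) * Ai
            = (C.card : ℝ) * ∑ p ∈ C, ‖p - mA‖ ^ 2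
              + (C.card : ℝ) * ∑ p ∈ B, ‖p - mA‖ ^ 2 := by
          rw [← hsplit]; ring
        linarith
      have h5 : (C.card : ℝ) * Ai ≤ (((k:ℝ) - 1) * (B.card : ℝ)) * Ai :=
        mul_le_mul_of_nonneg_right hrb hAinn
      have h6 : (B.card : ℝ) * ((A.card : ℝ) * X) ≤ (B.card : ℝ) * (((k:ℝ) - 1) * Ai) := by
        nlinarith
      exact le_of_mul_le_mul_left h6 hbR
  -- triangle inequality squared
  have htri : ‖mA - cc‖ ^ 2 ≤ 2 * X + 2 * Y := by
    have h0 : mA - cc = (mA - μ) + (μ - cc) := by abel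
    have h1 : ‖mA - cc‖ ≤ ‖mA - μ‖ + ‖μ - cc‖ := by
      rw [h0]; exact norm_add_le _ _
    have h2 : (0:ℝ) ≤ ‖mA - cc‖ := norm_nonneg _
    rw [hX, hY]
    nlinarith [sq_nonneg (‖mA - μ‖ - ‖μ - cc‖), norm_nonneg (mA - μ), norm_nonneg (μ - cc)]
  have h4 : (A.card : ℝ) * ‖mA - cc‖ ^ 2
      ≤ 2 * ((A.card : ℝ) * X) + 2 * ((A.card : ℝ) * Y) := by nlinarith
  rw [hid]
  linarith

set_option maxHeartbeats 1000000 in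
theorem stmt_18 {d k : ℕ} [DecidableEq (EuclideanSpace ℝ (Fin d))] (G : Finset (EuclideanSpace ℝ (Fin d)))
    (Opt S : Fin k → Finset (EuclideanSpace ℝ (Fin d)))
    (hOptdisj : ∀ i₁ i₂, i₁ ≠ i₂ → Disjoint (Opt i₁) (Opt i₂))
    (hSdisj : ∀ j₁ j₂, j₁ ≠ j₂ → Disjoint (S j₁) (S j₂))
    (hOptU : G = Finset.univ.biUnion Opt)
    (hSU : G = Finset.univ.biUnion S)
    (hOptne : ∀ i, (Opt i).Nonempty)
    (m c : Fin k → EuclideanSpace ℝ (Fin d))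
    (hm : ∀ i, m i = ((Opt i).card : ℝ)⁻¹ • ∑ p ∈ Opt i, p)
    (hc : ∀ j, c j = ((S j).card : ℝ)⁻¹ • ∑ p ∈ S j, p)
    (capp : ℝ)
    (happrox : ∑ j, ∑ p ∈ S j, ‖p - c j‖ ^ 2 ≤
      capp * ∑ i, ∑ p ∈ Opt i, ‖p - m i‖ ^ 2)
    (ji : Fin k → Fin k)
    (hji : ∀ i, (((Opt i ∩ S (ji i)).card : ℝ)) ≥ ((Opt i).card : ℝ) / (k : ℝ)) :
    ∑ i, ∑ p ∈ Opt i, ‖p - c (ji i)‖ ^ 2 ≤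
      (2 * capp * (k : ℝ) ^ 2 + 2 * (k : ℝ) - 1) *
        ∑ i, ∑ p ∈ Opt i, ‖p - m i‖ ^ 2 := by
  rcases Nat.eq_zero_or_pos k with hk | hk
  · subst hk
    simp
  have hkR : (0:ℝ) < k := by exact_mod_cast hk
  have hOPTnn : (0:ℝ) ≤ ∑ i, ∑ p ∈ Opt i, ‖p - m i‖ ^ 2 := by positivity
  have key : ∀ i, ∑ p ∈ Opt i, ‖p - c (ji i)‖ ^ 2 ≤
      (2 * (k:ℝ) - 1) * (∑ p ∈ Opt i, ‖p - m i‖ ^ 2)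
        + 2 * (k:ℝ) * (∑ j, ∑ p ∈ S j, ‖p - c j‖ ^ 2) := by
    intro i
    have hnR : (0:ℝ) < ((Opt i).card : ℝ) := by
      exact_mod_cast Finset.card_pos.2 (hOptne i)
    have hmi : ((Opt i).card : ℝ) • m i = ∑ p ∈ Opt i, p := by
      rw [hm i, smul_inv_smul₀ (ne_of_gt hnR)]
    have hKM1 : ∑ p ∈ S (ji i), ‖p - c (ji i)‖ ^ 2 ≤ ∑ j, ∑ p ∈ S j, ‖p - c j‖ ^ 2 :=
      Finset.single_le_sum (f := fun j => ∑ p ∈ S j, ‖p - c j‖ ^ 2)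
        (fun j _ => by positivity) (Finset.mem_univ (ji i))
    exact key_bound k hk (Opt i) (S (ji i)) (hOptne i) (m i) (c (ji i)) _ hmi (hji i) hKM1
  calc ∑ i, ∑ p ∈ Opt i, ‖p - c (ji i)‖ ^ 2
      ≤ ∑ i : Fin k, ((2 * (k:ℝ) - 1) * (∑ p ∈ Opt i, ‖p - m i‖ ^ 2)
          + 2 * (k:ℝ) * (∑ j, ∑ p ∈ S j, ‖p - c j‖ ^ 2)) :=
        Finset.sum_le_sum fun i _ => key i
    _ = (2 * (k:ℝ) - 1) * (∑ i, ∑ p ∈ Opt i, ‖p - m i‖ ^ 2)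
          + (k:ℝ) * (2 * (k:ℝ) * (∑ j, ∑ p ∈ S j, ‖p - c j‖ ^ 2)) := by
        rw [Finset.sum_add_distrib, ← Finset.mul_sum, Finset.sum_const, Finset.card_univ,
          Fintype.card_fin, nsmul_eq_mul]
    _ ≤ (2 * capp * (k : ℝ) ^ 2 + 2 * (k : ℝ) - 1) *
          ∑ i, ∑ p ∈ Opt i, ‖p - m i‖ ^ 2 := by
        have h7 : 2 * (k:ℝ)^2 * (∑ j, ∑ p ∈ S j, ‖p - c j‖ ^ 2)
            ≤ 2 * (k:ℝ)^2 * (capp * ∑ i, ∑ p ∈ Opt i, ‖p - m i‖ ^ 2) :=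
          mul_le_mul_of_nonneg_left happrox (by positivity)
        nlinarith
end

section
/- Let μ_opt = ∑_{j=1}^k β_j μ_j where β_j > 0, ∑β_j = 1. If points p_{v_j} satisfy ‖p_{v_j} − m_j‖ ≤ 4μ_j + (1+ε)·j·(ε/β_j)·μ_opt for each j, and Opt_j are sets of sizes β_j·N with ∑_{p∈Opt_j}‖p − m_j‖ = |Opt_j|·μ_j, then ∑_{j=1}^k ∑_{p∈Opt_j} ‖p − p_{v_j}‖ ≤ (5 + (1+ε)k²ε)·N·μ_opt. -/
theorem stmt_19 {d k : ℕ} (Opt : Fin k → Finset (EuclideanSpace ℝ (Fin d)))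
    (hdisj : ∀ j₁ j₂, j₁ ≠ j₂ → Disjoint (Opt j₁) (Opt j₂))
    (β μ : Fin k → ℝ) (hβpos : ∀ j, 0 < β j) (hβsum : ∑ j, β j = 1)
    (N : ℕ) (hN : N = ∑ j, (Opt j).card)
    (hsize : ∀ j, ((Opt j).card : ℝ) = β j * (N : ℝ))
    (m pv : Fin k → EuclideanSpace ℝ (Fin d))
    (hμ : ∀ j, ∑ p ∈ Opt j, ‖p - m j‖ = ((Opt j).card : ℝ) * μ j)
    (ε : ℝ) (hε : 0 < ε)
    (μopt : ℝ) (hμopt : μopt = ∑ j, β j * μ j)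
    (hclose : ∀ j : Fin k,
      ‖pv j - m j‖ ≤ 4 * μ j + (1 + ε) * ((j : ℕ) + 1) * (ε / β j) * μopt) :
    ∑ j, ∑ p ∈ Opt j, ‖p - pv j‖ ≤
      (5 + (1 + ε) * (k : ℝ) ^ 2 * ε) * (N : ℝ) * μopt := by
  rcases Nat.eq_zero_or_pos N with hN0 | hNpos
  · have hcard : ∀ j, (Opt j) = ∅ := by
      intro j
      have h := hsize j
      rw [hN0] at h
      simp at h
      exact h
    simp [hcard, hN0]
  · have hNR : (0:ℝ) < (N:ℝ) := by exact_mod_cast hNpos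
    have hμnn : ∀ j, 0 ≤ μ j := by
      intro j
      have h1 : 0 ≤ ∑ p ∈ Opt j, ‖p - m j‖ :=
        Finset.sum_nonneg fun p _ => norm_nonneg _
      rw [hμ j, hsize j] at h1
      nlinarith [mul_pos (hβpos j) hNR]
    have hμoptnn : 0 ≤ μopt := by
      rw [hμopt]
      exact Finset.sum_nonneg fun j _ => mul_nonneg (hβpos j).le (hμnn j)
    have key : ∀ j : Fin k, ∑ p ∈ Opt j, ‖p - pv j‖ ≤
        5 * (β j * (N:ℝ) * μ j) + (1 + ε) * (k:ℝ) * ε * (N:ℝ) * μopt := by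
      intro j
      have hstep1 : ∑ p ∈ Opt j, ‖p - pv j‖ ≤
          ((Opt j).card : ℝ) * μ j + ((Opt j).card : ℝ) * ‖pv j - m j‖ := by
        calc ∑ p ∈ Opt j, ‖p - pv j‖
            ≤ ∑ p ∈ Opt j, (‖p - m j‖ + ‖pv j - m j‖) := by
              apply Finset.sum_le_sum
              intro p _
              have h : p - pv j = (p - m j) + (m j - pv j) := by abel
              rw [h]
              calc ‖(p - m j) + (m j - pv j)‖ ≤ ‖p - m j‖ + ‖m j - pv j‖ :=
                    norm_add_le _ _
                _ = ‖p - m j‖ + ‖pv j - m j‖ := by rw [norm_sub_rev (m j) (pv j)]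
          _ = ((Opt j).card : ℝ) * μ j + ((Opt j).card : ℝ) * ‖pv j - m j‖ := by
              rw [Finset.sum_add_distrib, hμ j, Finset.sum_const, nsmul_eq_mul]
      have hj1 : ((j : ℕ) : ℝ) + 1 ≤ (k : ℝ) := by
        have := j.isLt
        exact_mod_cast Nat.succ_le_of_lt this
      have hβN : 0 < β j * (N:ℝ) := mul_pos (hβpos j) hNR
      have hclose' := hclose j
      have hb : β j * (N:ℝ) * ((1 + ε) * ((j:ℕ) + 1) * (ε / β j) * μopt)
          = (1 + ε) * ((j:ℕ) + 1) * ε * (N:ℝ) * μopt := by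
        have hβne : β j ≠ 0 := (hβpos j).ne'
        field_simp
      calc ∑ p ∈ Opt j, ‖p - pv j‖
          ≤ ((Opt j).card : ℝ) * μ j + ((Opt j).card : ℝ) * ‖pv j - m j‖ := hstep1
        _ ≤ β j * (N:ℝ) * μ j + β j * (N:ℝ) *
              (4 * μ j + (1 + ε) * ((j:ℕ) + 1) * (ε / β j) * μopt) := by
            rw [hsize j]
            have := mul_le_mul_of_nonneg_left hclose' hβN.le
            linarith
        _ = 5 * (β j * (N:ℝ) * μ j) + (1 + ε) * ((j:ℕ) + 1) * ε * (N:ℝ) * μopt := by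
            rw [mul_add, hb]; ring
        _ ≤ 5 * (β j * (N:ℝ) * μ j) + (1 + ε) * (k:ℝ) * ε * (N:ℝ) * μopt := by
            have hc : 0 ≤ (1 + ε) * (ε * ((N:ℝ) * μopt)) := by positivity
            nlinarith [mul_nonneg (mul_nonneg (mul_nonneg (by linarith : (0:ℝ) ≤ 1 + ε) hε.le) hNR.le) hμoptnn]
      
    calc ∑ j, ∑ p ∈ Opt j, ‖p - pv j‖
        ≤ ∑ j, (5 * (β j * (N:ℝ) * μ j) + (1 + ε) * (k:ℝ) * ε * (N:ℝ) * μopt) :=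
          Finset.sum_le_sum fun j _ => key j
      _ = 5 * (N:ℝ) * (∑ j, β j * μ j) + (k:ℝ) * ((1 + ε) * (k:ℝ) * ε * (N:ℝ) * μopt) := by
          rw [Finset.sum_add_distrib, Finset.sum_const, Finset.card_univ,
            Fintype.card_fin, nsmul_eq_mul, Finset.mul_sum]
          congr 1
          apply Finset.sum_congr rfl
          intro j _
          ring
      _ = (5 + (1 + ε) * (k : ℝ) ^ 2 * ε) * (N : ℝ) * μopt := by
          rw [← hμopt]; ring
end
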